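/- arXiv:0909.4117 — 2 statements merged into one kernel-verified Lean document; each statement's English description precedes it below -/
import Mathlib

section
/- Let H be a connected graded commutative Hopf algebra, A a commutative algebra decomposed as A = A₋ ⊕ A₊ with A₋, A₊ subalgebras (A₊ unital), and let π : A → A₋ be the projection, which is an idempotent Rota-Baxter operator of weight −1. Then every algebra homomorphism γ : H → A admits a unique Birkhoff decomposition γ = γ₋^{⋆−1} ⋆ γ₊ where γ₋ and γ₊ are algebra homomorphisms, γ₋(ker ε) ⊆ A₋, γ₊(H) ⊆ A₊, and γ₋(1) = 1. -/
open TensorProduct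

variable {k H A : Type*} [Field k] [CommRing H] [HopfAlgebra k H]
  [CommRing A] [Algebra k A]

/-- The convolution product `α ⋆ β = m_A ∘ (α ⊗ β) ∘ Δ` on linear maps `H → A`. -/
noncomputable def conv (α β : H →ₗ[k] A) : H →ₗ[k] A :=
  LinearMap.mul' k A ∘ₗ TensorProduct.map α β ∘ₗ Coalgebra.comul

namespace Birkhoff

variable (k H A) in
/-- unit of the convolution algebra -/
noncomputable def cunit : H →ₗ[k] A := Algebra.linearMap k A ∘ₗ Coalgebra.counit

lemma cunit_apply (x : H) :
    cunit k H A x = Coalgebra.counit (R := k) x • (1 : A) := by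
  simp [cunit, Algebra.smul_def]

lemma conv_apply (α β : H →ₗ[k] A) (x : H) :
    conv α β x = LinearMap.mul' k A (TensorProduct.map α β (Coalgebra.comul x)) := rfl

lemma conv_add_right (α β β' : H →ₗ[k] A) :
    conv α (β + β') = conv α β + conv α β' := by
  unfold conv
  rw [TensorProduct.map_add_right]
  ext x
  simp

lemma conv_add_left (α α' β : H →ₗ[k] A) :
    conv (α + α') β = conv α β + conv α' β := by
  unfold conv
  rw [TensorProduct.map_add_left]
  ext x
  simp

lemma conv_cunit_right (α : H →ₗ[k] A) : conv α (cunit k H A) = α := by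
  unfold conv cunit
  have h1 : TensorProduct.map α (Algebra.linearMap k A ∘ₗ Coalgebra.counit)
      = TensorProduct.map α (Algebra.linearMap k A) ∘ₗ
        (Coalgebra.counit (R := k) (A := H)).lTensor H := by
    rw [LinearMap.lTensor, ← TensorProduct.map_comp]
    simp
  rw [h1]
  ext x
  have h2 := congr($(Coalgebra.lTensor_counit_comp_comul (R := k) (A := H)) x)
  simp only [LinearMap.comp_apply] at h2 ⊢
  rw [h2]
  simp [Algebra.smul_def]

lemma conv_cunit_left (β : H →ₗ[k] A) : conv (cunit k H A) β = β := by
  unfold conv cunit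
  have h1 : TensorProduct.map (Algebra.linearMap k A ∘ₗ Coalgebra.counit) β
      = TensorProduct.map (Algebra.linearMap k A) β ∘ₗ
        (Coalgebra.counit (R := k) (A := H)).rTensor H := by
    rw [LinearMap.rTensor, ← TensorProduct.map_comp]
    simp
  rw [h1]
  ext x
  have h2 := congr($(Coalgebra.rTensor_counit_comp_comul (R := k) (A := H)) x)
  simp only [LinearMap.comp_apply] at h2 ⊢
  rw [h2]
  simp [Algebra.smul_def, Algebra.commutes]

lemma conv_assoc (α β c : H →ₗ[k] A) : conv (conv α β) c = conv α (conv β c) := by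
  set G1 : (H ⊗[k] H) ⊗[k] H →ₗ[k] A :=
    LinearMap.mul' k A ∘ₗ (LinearMap.mul' k A).rTensor A ∘ₗ
      TensorProduct.map (TensorProduct.map α β) c with hG1
  set G2 : H ⊗[k] (H ⊗[k] H) →ₗ[k] A :=
    LinearMap.mul' k A ∘ₗ (LinearMap.mul' k A).lTensor A ∘ₗ
      TensorProduct.map α (TensorProduct.map β c) with hG2
  have e1 : LinearMap.mul' k A ∘ₗ TensorProduct.map (conv α β) c
      = G1 ∘ₗ (Coalgebra.comul (R := k) (A := H)).rTensor H := by
    apply TensorProduct.ext'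
    intro x y
    simp [hG1, conv, LinearMap.mul'_apply]
  have e2 : LinearMap.mul' k A ∘ₗ TensorProduct.map α (conv β c)
      = G2 ∘ₗ (Coalgebra.comul (R := k) (A := H)).lTensor H := by
    apply TensorProduct.ext'
    intro x y
    simp [hG2, conv, LinearMap.mul'_apply]
  have e3 : G1 = G2 ∘ₗ (TensorProduct.assoc k H H H).toLinearMap := by
    apply TensorProduct.ext_threefold
    intro x y z
    simp [hG1, hG2, LinearMap.mul'_apply, mul_assoc]
  ext x
  have l1 : conv (conv α β) c x
      = G1 ((Coalgebra.comul (R := k) (A := H)).rTensor H (Coalgebra.comul x)) := by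
    have := congr($e1 (Coalgebra.comul (R := k) x))
    simpa [conv] using this
  have l2 : conv α (conv β c) x
      = G2 ((Coalgebra.comul (R := k) (A := H)).lTensor H (Coalgebra.comul x)) := by
    have := congr($e2 (Coalgebra.comul (R := k) x))
    simpa [conv] using this
  rw [l1, l2, e3]
  simp only [LinearMap.comp_apply, LinearEquiv.coe_coe]
  rw [Coalgebra.coassoc_apply]

lemma mul_comp_map_algHom (f : H →ₐ[k] A) (g h : H →ₗ[k] H) :
    LinearMap.mul' k A ∘ₗ TensorProduct.map (f.toLinearMap ∘ₗ g) (f.toLinearMap ∘ₗ h)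
      = f.toLinearMap ∘ₗ LinearMap.mul' k H ∘ₗ TensorProduct.map g h := by
  apply TensorProduct.ext'
  intro x y
  simp [LinearMap.mul'_apply]

lemma conv_antipode_left (f : H →ₐ[k] A) :
    conv (f.toLinearMap ∘ₗ HopfAlgebra.antipode (R := k)) f.toLinearMap
      = cunit k H A := by
  have key := mul_comp_map_algHom f (HopfAlgebra.antipode (R := k)) LinearMap.id
  rw [LinearMap.comp_id] at key
  unfold conv
  rw [← LinearMap.comp_assoc, key]
  have : TensorProduct.map (HopfAlgebra.antipode (R := k) (A := H)) LinearMap.id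
      = (HopfAlgebra.antipode (R := k) (A := H)).rTensor H := rfl
  rw [this]
  simp only [LinearMap.comp_assoc]
  rw [HopfAlgebra.mul_antipode_rTensor_comul]
  ext x
  simp [cunit]

lemma conv_antipode_right (f : H →ₐ[k] A) :
    conv f.toLinearMap (f.toLinearMap ∘ₗ HopfAlgebra.antipode (R := k))
      = cunit k H A := by
  have key := mul_comp_map_algHom f LinearMap.id (HopfAlgebra.antipode (R := k))
  rw [LinearMap.comp_id] at key
  unfold conv
  rw [← LinearMap.comp_assoc, key]
  have : TensorProduct.map (LinearMap.id : H →ₗ[k] H)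
        (HopfAlgebra.antipode (R := k) (A := H))
      = (HopfAlgebra.antipode (R := k) (A := H)).lTensor H := rfl
  rw [this]
  simp only [LinearMap.comp_assoc]
  rw [HopfAlgebra.mul_antipode_lTensor_comul]
  ext x
  simp [cunit]

/-- conv of two algebra maps is multiplicative (A commutative). -/
lemma mulmap_mul (f g : H →ₐ[k] A) (z w : H ⊗[k] H) :
    (LinearMap.mul' k A ∘ₗ TensorProduct.map f.toLinearMap g.toLinearMap) (z * w)
      = (LinearMap.mul' k A ∘ₗ TensorProduct.map f.toLinearMap g.toLinearMap) z *
        (LinearMap.mul' k A ∘ₗ TensorProduct.map f.toLinearMap g.toLinearMap) w := by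
  set F := LinearMap.mul' k A ∘ₗ TensorProduct.map f.toLinearMap g.toLinearMap with hF
  induction z using TensorProduct.induction_on with
  | zero => simp
  | tmul a b =>
    induction w using TensorProduct.induction_on with
    | zero => simp
    | tmul c d =>
      simp [hF, Algebra.TensorProduct.tmul_mul_tmul, LinearMap.mul'_apply]
      ring
    | add w₁ w₂ ih1 ih2 => rw [mul_add, map_add, ih1, ih2, map_add, mul_add]
  | add z₁ z₂ ih1 ih2 => rw [add_mul, map_add, ih1, ih2, map_add, add_mul]

lemma conv_algHom_one (f g : H →ₐ[k] A) :
    conv f.toLinearMap g.toLinearMap 1 = 1 := by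
  simp [conv, LinearMap.mul'_apply, Bialgebra.comul_one, Algebra.TensorProduct.one_def]

lemma conv_algHom_mul (f g : H →ₐ[k] A) (x y : H) :
    conv f.toLinearMap g.toLinearMap (x * y)
      = conv f.toLinearMap g.toLinearMap x * conv f.toLinearMap g.toLinearMap y := by
  simp only [conv, LinearMap.comp_apply, Bialgebra.comul_mul]
  exact mulmap_mul f g _ _

section Graded

variable (𝒜 : ℕ → Submodule k H) [GradedAlgebra 𝒜]

/-- projection onto the `p`-th graded piece -/
noncomputable def proj (p : ℕ) : H →ₗ[k] H :=
  (𝒜 p).subtype ∘ₗ (DirectSum.component k ℕ (fun n => 𝒜 n) p) ∘ₗ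
    (DirectSum.decomposeLinearEquiv 𝒜).toLinearMap

noncomputable def proj' (p : ℕ) : H →ₗ[k] (𝒜 p) :=
  (DirectSum.component k ℕ (fun n => 𝒜 n) p) ∘ₗ
    (DirectSum.decomposeLinearEquiv 𝒜).toLinearMap

lemma proj_eq (p : ℕ) : proj 𝒜 p = (𝒜 p).subtype ∘ₗ proj' 𝒜 p := rfl

lemma proj_mem (p : ℕ) (x : H) : proj 𝒜 p x ∈ 𝒜 p := SetLike.coe_mem _

lemma proj_apply (p : ℕ) (x : H) :
    proj 𝒜 p x = (DirectSum.decompose 𝒜 x p : H) := rfl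

lemma proj_of_mem {p : ℕ} {x : H} (h : x ∈ 𝒜 p) : proj 𝒜 p x = x := by
  rw [proj_apply, DirectSum.decompose_of_mem_same 𝒜 h]

lemma proj_of_mem_ne {p q : ℕ} {x : H} (h : x ∈ 𝒜 q) (hne : q ≠ p) :
    proj 𝒜 p x = 0 := by
  rw [proj_apply, DirectSum.decompose_of_mem_ne 𝒜 h hne]

lemma ext_graded {M : Type*} [AddCommMonoid M] [Module k M] {f g : H →ₗ[k] M}
    (h : ∀ p, ∀ x ∈ 𝒜 p, f x = g x) : f = g := by
  classical
  ext x
  rw [← DirectSum.sum_support_decompose 𝒜 x, map_sum, map_sum]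
  exact Finset.sum_congr rfl fun i _ => h i _ (SetLike.coe_mem _)

lemma map_zero_left {M N P Q : Type*} [AddCommMonoid M] [AddCommMonoid N]
    [AddCommMonoid P] [AddCommMonoid Q] [Module k M] [Module k N] [Module k P] [Module k Q]
    (g : N →ₗ[k] Q) : TensorProduct.map (0 : M →ₗ[k] P) g = 0 := by
  apply TensorProduct.ext'; intro x y; simp

lemma map_zero_right {M N P Q : Type*} [AddCommMonoid M] [AddCommMonoid N]
    [AddCommMonoid P] [AddCommMonoid Q] [Module k M] [Module k N] [Module k P] [Module k Q]
    (f : M →ₗ[k] P) : TensorProduct.map f (0 : N →ₗ[k] Q) = 0 := by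
  apply TensorProduct.ext'; intro x y; simp

lemma proj_comp_subtype_same (p : ℕ) :
    proj 𝒜 p ∘ₗ (𝒜 p).subtype = (𝒜 p).subtype := by
  ext u; exact proj_of_mem 𝒜 u.2

lemma proj_comp_subtype_ne {p q : ℕ} (h : q ≠ p) :
    proj 𝒜 p ∘ₗ (𝒜 q).subtype = 0 := by
  ext u; exact proj_of_mem_ne 𝒜 u.2 h

lemma Pm_comp_incl_same (p q : ℕ) (u : (𝒜 p) ⊗[k] (𝒜 q)) :
    TensorProduct.map (proj 𝒜 p) (proj 𝒜 q)
      (TensorProduct.map (𝒜 p).subtype (𝒜 q).subtype u)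
    = TensorProduct.map (𝒜 p).subtype (𝒜 q).subtype u := by
  rw [← LinearMap.comp_apply, ← TensorProduct.map_comp,
    proj_comp_subtype_same, proj_comp_subtype_same]

lemma Pm_comp_incl_ne (p q p' q' : ℕ) (h : p' ≠ p) (u : (𝒜 p') ⊗[k] (𝒜 q')) :
    TensorProduct.map (proj 𝒜 p) (proj 𝒜 q)
      (TensorProduct.map (𝒜 p').subtype (𝒜 q').subtype u) = 0 := by
  rw [← LinearMap.comp_apply, ← TensorProduct.map_comp,
    proj_comp_subtype_ne 𝒜 h, map_zero_left]
  simp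

lemma comul_sum
    (hcomul : ∀ n : ℕ, ∀ x ∈ 𝒜 n, Coalgebra.comul (R := k) x ∈
      ⨆ p ∈ Finset.range (n + 1),
        LinearMap.range (TensorProduct.map (𝒜 p).subtype (𝒜 (n - p)).subtype))
    (n : ℕ) (x : H) (hx : x ∈ 𝒜 n) :
    Coalgebra.comul (R := k) x
      = ∑ p ∈ Finset.range (n+1),
          TensorProduct.map (proj 𝒜 p) (proj 𝒜 (n-p)) (Coalgebra.comul (R := k) x) := by
  have h := hcomul n x hx
  set T : H ⊗[k] H →ₗ[k] H ⊗[k] H :=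
    ∑ p ∈ Finset.range (n+1), TensorProduct.map (proj 𝒜 p) (proj 𝒜 (n-p)) with hT
  have key : (⨆ p ∈ Finset.range (n + 1),
        LinearMap.range (TensorProduct.map (𝒜 p).subtype (𝒜 (n - p)).subtype))
      ≤ LinearMap.eqLocus T LinearMap.id := by
    refine iSup₂_le fun p hp => ?_
    rintro _ ⟨u, rfl⟩
    simp only [LinearMap.mem_eqLocus, LinearMap.id_apply, hT, LinearMap.sum_apply]
    rw [Finset.sum_eq_single p]
    · exact Pm_comp_incl_same 𝒜 p (n-p) u
    · intro q hq hqp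
      exact Pm_comp_incl_ne 𝒜 q (n-q) p (n-p) (Ne.symm hqp) u
    · intro hp'; exact absurd hp hp'
  have hthis := key h
  simp only [LinearMap.mem_eqLocus, LinearMap.id_apply] at hthis
  conv_lhs => rw [← hthis]
  simp only [hT, LinearMap.sum_apply]

variable (k H) in
noncomputable def cL : H ⊗[k] H →ₗ[k] H :=
  (TensorProduct.lid k H).toLinearMap ∘ₗ
    (Coalgebra.counit (R := k) (A := H)).rTensor H

variable (k H) in
noncomputable def cR : H ⊗[k] H →ₗ[k] H :=
  (TensorProduct.rid k H).toLinearMap ∘ₗ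
    (Coalgebra.counit (R := k) (A := H)).lTensor H

lemma cL_tmul (a b : H) : cL k H (a ⊗ₜ[k] b) = Coalgebra.counit (R := k) a • b := by
  simp [cL]

lemma cR_tmul (a b : H) : cR k H (a ⊗ₜ[k] b) = Coalgebra.counit (R := k) b • a := by
  simp [cR]

lemma cL_comul (x : H) : cL k H (Coalgebra.comul (R := k) x) = x := by
  have h2 := congr($(Coalgebra.rTensor_counit_comp_comul (R := k) (A := H)) x)
  simp only [LinearMap.comp_apply] at h2
  simp [cL, h2]

lemma cR_comul (x : H) : cR k H (Coalgebra.comul (R := k) x) = x := by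
  have h2 := congr($(Coalgebra.lTensor_counit_comp_comul (R := k) (A := H)) x)
  simp only [LinearMap.comp_apply] at h2
  simp [cR, h2]

lemma cL_mem_range {p q : ℕ} {w : H ⊗[k] H}
    (hw : w ∈ LinearMap.range (TensorProduct.map (𝒜 p).subtype (𝒜 q).subtype)) :
    cL k H w ∈ 𝒜 q := by
  have : LinearMap.range (TensorProduct.map (𝒜 p).subtype (𝒜 q).subtype)
      ≤ Submodule.comap (cL k H) (𝒜 q) := by
    rw [TensorProduct.range_map_eq_span_tmul, Submodule.span_le]
    rintro _ ⟨a, b, rfl⟩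
    simp only [SetLike.mem_coe, Submodule.mem_comap, cL_tmul]
    exact Submodule.smul_mem _ _ b.2
  exact this hw

lemma cR_mem_range {p q : ℕ} {w : H ⊗[k] H}
    (hw : w ∈ LinearMap.range (TensorProduct.map (𝒜 p).subtype (𝒜 q).subtype)) :
    cR k H w ∈ 𝒜 p := by
  have : LinearMap.range (TensorProduct.map (𝒜 p).subtype (𝒜 q).subtype)
      ≤ Submodule.comap (cR k H) (𝒜 p) := by
    rw [TensorProduct.range_map_eq_span_tmul, Submodule.span_le]
    rintro _ ⟨a, b, rfl⟩
    simp only [SetLike.mem_coe, Submodule.mem_comap, cR_tmul]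
    exact Submodule.smul_mem _ _ a.2
  exact this hw

lemma mem_deg0 (hconn : 𝒜 0 = Submodule.span k {(1 : H)}) {x : H} (h : x ∈ 𝒜 0) :
    x = Coalgebra.counit (R := k) x • (1 : H) := by
  rw [hconn] at h
  obtain ⟨c, rfl⟩ := Submodule.mem_span_singleton.1 h
  simp [Bialgebra.counit_one]

lemma eq_one_tmul (hconn : 𝒜 0 = Submodule.span k {(1 : H)}) {q : ℕ} {w : H ⊗[k] H}
    (hw : w ∈ LinearMap.range (TensorProduct.map (𝒜 0).subtype (𝒜 q).subtype)) :
    w = (1 : H) ⊗ₜ[k] cL k H w := by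
  have : LinearMap.range (TensorProduct.map (𝒜 0).subtype (𝒜 q).subtype)
      ≤ LinearMap.eqLocus (LinearMap.id)
          ((TensorProduct.mk k H H 1) ∘ₗ cL k H) := by
    rw [TensorProduct.range_map_eq_span_tmul, Submodule.span_le]
    rintro _ ⟨a, b, rfl⟩
    simp only [SetLike.mem_coe, LinearMap.mem_eqLocus, LinearMap.id_apply,
      LinearMap.comp_apply, cL_tmul, TensorProduct.mk_apply, Submodule.coe_subtype]
    have ha := mem_deg0 𝒜 hconn a.2
    conv_lhs => rw [ha]
    rw [TensorProduct.smul_tmul]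
  have := this hw
  simp only [LinearMap.mem_eqLocus, LinearMap.id_apply, LinearMap.comp_apply,
    TensorProduct.mk_apply] at this
  exact this

lemma eq_tmul_one (hconn : 𝒜 0 = Submodule.span k {(1 : H)}) {p : ℕ} {w : H ⊗[k] H}
    (hw : w ∈ LinearMap.range (TensorProduct.map (𝒜 p).subtype (𝒜 0).subtype)) :
    w = cR k H w ⊗ₜ[k] (1 : H) := by
  have : LinearMap.range (TensorProduct.map (𝒜 p).subtype (𝒜 0).subtype)
      ≤ LinearMap.eqLocus (LinearMap.id)
          (((TensorProduct.mk k H H).flip 1) ∘ₗ cR k H) := by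
    rw [TensorProduct.range_map_eq_span_tmul, Submodule.span_le]
    rintro _ ⟨a, b, rfl⟩
    simp only [SetLike.mem_coe, LinearMap.mem_eqLocus, LinearMap.id_apply,
      LinearMap.comp_apply, cR_tmul, LinearMap.flip_apply, TensorProduct.mk_apply,
      Submodule.coe_subtype]
    have hb := mem_deg0 𝒜 hconn b.2
    conv_lhs => rw [hb]
    rw [TensorProduct.tmul_smul, TensorProduct.smul_tmul']
  have := this hw
  simpa using this

/-- the span of reduced-coproduct-type tensors in bidegrees `(p, q)`, `p + q = n`,
`p, q ≥ 1` -/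
def Dred (n : ℕ) : Submodule k (H ⊗[k] H) :=
  Submodule.span k {z | ∃ p q : ℕ, p + q = n ∧ 0 < p ∧ 0 < q ∧
    ∃ u ∈ 𝒜 p, ∃ v ∈ 𝒜 q, z = u ⊗ₜ[k] v}

lemma range_le_Dred {p : ℕ} {n : ℕ} (hp : 0 < p) (hpn : p < n) :
    LinearMap.range (TensorProduct.map (𝒜 p).subtype (𝒜 (n-p)).subtype)
      ≤ Dred 𝒜 n := by
  rw [TensorProduct.range_map_eq_span_tmul, Submodule.span_le]
  rintro _ ⟨a, b, rfl⟩
  exact Submodule.subset_span ⟨p, n - p, by omega, hp, by omega, a, a.2, b, b.2, rfl⟩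

theorem comul_structure (hconn : 𝒜 0 = Submodule.span k {(1 : H)})
    (hcomul : ∀ n : ℕ, ∀ x ∈ 𝒜 n, Coalgebra.comul (R := k) x ∈
      ⨆ p ∈ Finset.range (n + 1),
        LinearMap.range (TensorProduct.map (𝒜 p).subtype (𝒜 (n - p)).subtype))
    (n : ℕ) (hn : 0 < n) (x : H) (hx : x ∈ 𝒜 n) :
    Coalgebra.counit (R := k) x = 0 ∧
    Coalgebra.comul (R := k) x - x ⊗ₜ[k] (1 : H) - (1 : H) ⊗ₜ[k] x ∈ Dred 𝒜 n := by
  classical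
  set t : ℕ → H ⊗[k] H := fun p =>
    TensorProduct.map (proj 𝒜 p) (proj 𝒜 (n-p)) (Coalgebra.comul (R := k) x) with ht
  have hsum : Coalgebra.comul (R := k) x = ∑ p ∈ Finset.range (n+1), t p :=
    comul_sum 𝒜 hcomul n x hx
  have htr : ∀ p, t p ∈ LinearMap.range
      (TensorProduct.map (𝒜 p).subtype (𝒜 (n-p)).subtype) := by
    intro p
    have hfac : TensorProduct.map (proj 𝒜 p) (proj 𝒜 (n-p))
        = TensorProduct.map (𝒜 p).subtype (𝒜 (n-p)).subtype ∘ₗ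
          TensorProduct.map (proj' 𝒜 p) (proj' 𝒜 (n-p)) := by
      rw [← TensorProduct.map_comp]; rfl
    show TensorProduct.map (proj 𝒜 p) (proj 𝒜 (n-p)) (Coalgebra.comul (R := k) x) ∈ _
    rw [hfac]
    exact ⟨_, rfl⟩
  -- left counit components
  have hzmem : ∀ p, cL k H (t p) ∈ 𝒜 (n-p) := fun p => cL_mem_range 𝒜 (htr p)
  have hzsum : ∑ p ∈ Finset.range (n+1), cL k H (t p) = x := by
    rw [← map_sum, ← hsum, cL_comul]
  have hz0 : cL k H (t 0) = x := by
    have h1 := congr(proj 𝒜 n $hzsum)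
    rw [map_sum, proj_of_mem 𝒜 hx,
      Finset.sum_eq_single 0
        (fun p hp hp0 => proj_of_mem_ne 𝒜 (hzmem p) (by simp at hp; omega))
        (by simp)] at h1
    rw [← proj_of_mem 𝒜 (show cL k H (t 0) ∈ 𝒜 n by simpa using hzmem 0), h1]
  -- right counit components
  have hymem : ∀ p, cR k H (t p) ∈ 𝒜 p := fun p => cR_mem_range 𝒜 (htr p)
  have hysum : ∑ p ∈ Finset.range (n+1), cR k H (t p) = x := by
    rw [← map_sum, ← hsum, cR_comul]
  have hyn : cR k H (t n) = x := by
    have h1 := congr(proj 𝒜 n $hysum)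
    rw [map_sum, proj_of_mem 𝒜 hx,
      Finset.sum_eq_single n
        (fun q hq hqn => proj_of_mem_ne 𝒜 (hymem q) hqn)
        (by simp)] at h1
    rw [← proj_of_mem 𝒜 (hymem n), h1]
  have hyp : ∀ p, p < n → cR k H (t p) = 0 := by
    intro p hpn
    have h1 := congr(proj 𝒜 p $hysum)
    rw [map_sum, proj_of_mem_ne 𝒜 hx (by omega),
      Finset.sum_eq_single p
        (fun q hq hqp => proj_of_mem_ne 𝒜 (hymem q) hqp)
        (fun hp' => by simp at hp'; omega)] at h1
    rw [← proj_of_mem 𝒜 (hymem p), ← h1]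
  -- identification of extreme components
  have ht0 : t 0 = (1 : H) ⊗ₜ[k] x := by
    have := eq_one_tmul 𝒜 hconn (htr 0)
    rw [hz0] at this
    exact this
  have htn : t n = x ⊗ₜ[k] (1 : H) := by
    have hmem := htr n
    rw [Nat.sub_self] at hmem
    have h2 := eq_tmul_one 𝒜 hconn hmem
    rw [hyn] at h2
    exact h2
  have hcounit : Coalgebra.counit (R := k) x = 0 := by
    have h1 : cR k H (t 0) = Coalgebra.counit (R := k) x • (1:H) := by
      rw [ht0, cR_tmul]
    have h2 : cR k H (t 0) = 0 := hyp 0 hn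
    have h3 : Coalgebra.counit (R := k) x • (1:H) = 0 := by rw [← h1, h2]
    have h4 := congr(Coalgebra.counit (R := k) $h3)
    simpa [Bialgebra.counit_one] using h4
  refine ⟨hcounit, ?_⟩
  have e0 : (0:ℕ) ∈ Finset.range (n+1) := by simp
  have en : n ∈ (Finset.range (n+1)).erase 0 := by
    simp only [Finset.mem_erase, Finset.mem_range]; omega
  have hsplit : Coalgebra.comul (R := k) x - x ⊗ₜ[k] (1:H) - (1:H) ⊗ₜ[k] x
      = ∑ p ∈ ((Finset.range (n+1)).erase 0).erase n, t p := by
    rw [hsum, ← Finset.add_sum_erase _ t e0, ht0, ← Finset.add_sum_erase _ t en, htn]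
    abel
  rw [hsplit]
  apply Submodule.sum_mem
  intro p hp
  simp only [Finset.mem_erase, Finset.mem_range] at hp
  exact range_le_Dred 𝒜 (by omega) (by omega) (htr p)

end Graded

section Proj

variable (Aneg : NonUnitalSubalgebra k A) (Apos : Subalgebra k A)

noncomputable def piL
    (hcompl : IsCompl Aneg.toSubmodule (Subalgebra.toSubmodule Apos)) : A →ₗ[k] A :=
  Aneg.toSubmodule.subtype ∘ₗ Submodule.projectionOnto _ _ hcompl

variable {Aneg Apos} (hcompl : IsCompl Aneg.toSubmodule (Subalgebra.toSubmodule Apos))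

lemma piL_mem (a : A) : piL Aneg Apos hcompl a ∈ Aneg :=
  (Submodule.projectionOnto _ _ hcompl a).2

lemma piL_left {a : A} (h : a ∈ Aneg) : piL Aneg Apos hcompl a = a := by
  have := Submodule.projectionOnto_apply_left hcompl
    (⟨a, h⟩ : Aneg.toSubmodule)
  simp only [piL, LinearMap.comp_apply, Submodule.coe_subtype]
  rw [this]

lemma piL_right {a : A} (h : a ∈ Apos) : piL Aneg Apos hcompl a = 0 := by
  simp only [piL, LinearMap.comp_apply, Submodule.coe_subtype]
  rw [Submodule.projectionOnto_apply_of_mem_right hcompl h]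
  rfl

lemma sub_piL_mem (a : A) : a - piL Aneg Apos hcompl a ∈ Apos := by
  have h1 : Submodule.projectionOnto _ _ hcompl (a - piL Aneg Apos hcompl a) = 0 := by
    rw [map_sub]
    have : piL Aneg Apos hcompl a = ((Submodule.projectionOnto _ _ hcompl a : Aneg.toSubmodule) : A) := rfl
    rw [this, Submodule.projectionOnto_apply_left hcompl, sub_self]
  have := (Submodule.projectionOnto_apply_eq_zero_iff hcompl).1 h1
  exact this

lemma piL_rotaBaxter (a b : A) :
    piL Aneg Apos hcompl a * piL Aneg Apos hcompl b
      = piL Aneg Apos hcompl (piL Aneg Apos hcompl a * b + a * piL Aneg Apos hcompl b - a * b) := by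
  have key : piL Aneg Apos hcompl a * b + a * piL Aneg Apos hcompl b - a * b
      = piL Aneg Apos hcompl a * piL Aneg Apos hcompl b
        - (a - piL Aneg Apos hcompl a) * (b - piL Aneg Apos hcompl b) := by ring
  rw [key, map_sub,
    piL_left hcompl (mul_mem (piL_mem hcompl a) (piL_mem hcompl b)),
    piL_right hcompl (mul_mem (sub_piL_mem hcompl a) (sub_piL_mem hcompl b)),
    sub_zero]

end Proj

section Construction

variable (𝒜 : ℕ → Submodule k H) [GradedAlgebra 𝒜]
variable {Aneg : NonUnitalSubalgebra k A} {Apos : Subalgebra k A}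

variable (k H A) in
noncomputable def phi (γ : H →ₐ[k] A) : H →ₗ[k] A := γ.toLinearMap - cunit k H A

lemma phi_apply (γ : H →ₐ[k] A) (x : H) :
    phi k H A γ x = γ x - Coalgebra.counit (R := k) x • (1 : A) := by
  simp [phi, cunit_apply]

lemma phi_one (γ : H →ₐ[k] A) : phi k H A γ 1 = 0 := by
  simp [phi_apply, Bialgebra.counit_one]

lemma one_mem_deg0 : (1 : H) ∈ 𝒜 0 := SetLike.one_mem_graded 𝒜

/-- partial solutions of the Bogoliubov recursion -/
noncomputable def Sseq (hcompl : IsCompl Aneg.toSubmodule (Subalgebra.toSubmodule Apos))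
    (γ : H →ₐ[k] A) : ℕ → (H →ₗ[k] A)
  | 0 => cunit k H A
  | n+1 => cunit k H A - piL Aneg Apos hcompl ∘ₗ conv (Sseq hcompl γ n) (phi k H A γ)

variable (hcompl : IsCompl Aneg.toSubmodule (Subalgebra.toSubmodule Apos)) (γ : H →ₐ[k] A)

/-- the negative part of the Birkhoff decomposition, as a linear map -/
noncomputable def gm : H →ₗ[k] A :=
  (DirectSum.toModule k ℕ A fun n => Sseq hcompl γ n ∘ₗ (𝒜 n).subtype) ∘ₗ
    (DirectSum.decomposeLinearEquiv 𝒜).toLinearMap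

lemma gm_of_mem {n : ℕ} {x : H} (hx : x ∈ 𝒜 n) :
    gm 𝒜 hcompl γ x = Sseq hcompl γ n x := by
  simp only [gm, LinearMap.comp_apply, LinearEquiv.coe_coe,
    DirectSum.decomposeLinearEquiv_apply]
  rw [DirectSum.decompose_of_mem 𝒜 hx, ← DirectSum.lof_eq_of k, DirectSum.toModule_lof]
  rfl

/-- comul on elements of positive degree -/
lemma comul_eq (hconn : 𝒜 0 = Submodule.span k {(1 : H)})
    (hcomul : ∀ n : ℕ, ∀ x ∈ 𝒜 n, Coalgebra.comul (R := k) x ∈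
      ⨆ p ∈ Finset.range (n + 1),
        LinearMap.range (TensorProduct.map (𝒜 p).subtype (𝒜 (n - p)).subtype))
    {n : ℕ} (hn : 0 < n) {x : H} (hx : x ∈ 𝒜 n) :
    ∃ w ∈ Dred 𝒜 n,
      Coalgebra.comul (R := k) x = x ⊗ₜ[k] (1 : H) + (1 : H) ⊗ₜ[k] x + w := by
  obtain ⟨-, h2⟩ := comul_structure 𝒜 hconn hcomul n hn x hx
  exact ⟨_, h2, by abel⟩

lemma counit_pos_deg (hconn : 𝒜 0 = Submodule.span k {(1 : H)})
    (hcomul : ∀ n : ℕ, ∀ x ∈ 𝒜 n, Coalgebra.comul (R := k) x ∈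
      ⨆ p ∈ Finset.range (n + 1),
        LinearMap.range (TensorProduct.map (𝒜 p).subtype (𝒜 (n - p)).subtype))
    {n : ℕ} (hn : 0 < n) {x : H} (hx : x ∈ 𝒜 n) :
    Coalgebra.counit (R := k) x = 0 :=
  (comul_structure 𝒜 hconn hcomul n hn x hx).1

lemma conv_eval (α β : H →ₗ[k] A) {x : H} {w : H ⊗[k] H}
    (hw : Coalgebra.comul (R := k) x = x ⊗ₜ[k] (1 : H) + (1 : H) ⊗ₜ[k] x + w) :
    conv α β x = α x * β 1 + α 1 * β x
      + (LinearMap.mul' k A ∘ₗ TensorProduct.map α β) w := by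
  rw [conv_apply, hw]
  simp [LinearMap.mul'_apply]

lemma conv_phi_zero_deg (γ : H →ₐ[k] A) (α : H →ₗ[k] A)
    (hconn : 𝒜 0 = Submodule.span k {(1 : H)}) {x : H} (hx : x ∈ 𝒜 0) :
    conv α (phi k H A γ) x = 0 := by
  have hx1 := mem_deg0 𝒜 hconn hx
  have h1 : conv α (phi k H A γ) (1 : H) = 0 := by
    rw [conv_apply]
    simp [Bialgebra.comul_one, Algebra.TensorProduct.one_def, LinearMap.mul'_apply,
      phi_one]
  calc conv α (phi k H A γ) x
      = Coalgebra.counit (R := k) x • conv α (phi k H A γ) 1 := by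
        conv_lhs => rw [hx1]
        rw [map_smul]
    _ = 0 := by rw [h1, smul_zero]

/-- the value of `conv α (phi γ)` on `𝒜 i` only depends on `α` in degrees `< i` -/
lemma conv_phi_congr (γ : H →ₐ[k] A)
    (hconn : 𝒜 0 = Submodule.span k {(1 : H)})
    (hcomul : ∀ n : ℕ, ∀ x ∈ 𝒜 n, Coalgebra.comul (R := k) x ∈
      ⨆ p ∈ Finset.range (n + 1),
        LinearMap.range (TensorProduct.map (𝒜 p).subtype (𝒜 (n - p)).subtype))
    (α β : H →ₗ[k] A) (i : ℕ) (x : H) (hx : x ∈ 𝒜 i)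
    (h : ∀ p, p < i → ∀ z ∈ 𝒜 p, α z = β z) :
    conv α (phi k H A γ) x = conv β (phi k H A γ) x := by
  rcases Nat.eq_zero_or_pos i with hi | hi
  · subst hi
    rw [conv_phi_zero_deg 𝒜 γ α hconn hx, conv_phi_zero_deg 𝒜 γ β hconn hx]
  · obtain ⟨w, hwD, hw⟩ := comul_eq 𝒜 hconn hcomul hi hx
    rw [conv_eval α _ hw, conv_eval β _ hw, phi_one, mul_zero, mul_zero,
      h 0 hi 1 (one_mem_deg0 𝒜)]
    have hB : (LinearMap.mul' k A ∘ₗ TensorProduct.map α (phi k H A γ)) w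
        = (LinearMap.mul' k A ∘ₗ TensorProduct.map β (phi k H A γ)) w := by
      have hle : Dred 𝒜 i ≤ LinearMap.eqLocus
          (LinearMap.mul' k A ∘ₗ TensorProduct.map α (phi k H A γ))
          (LinearMap.mul' k A ∘ₗ TensorProduct.map β (phi k H A γ)) := by
        rw [Dred, Submodule.span_le]
        rintro _ ⟨p, q, hpq, hp, hq, u, hu, v, hv, rfl⟩
        simp only [SetLike.mem_coe, LinearMap.mem_eqLocus, LinearMap.comp_apply,
          TensorProduct.map_tmul, LinearMap.mul'_apply]
        rw [h p (by omega) u hu]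
      exact hle hwD
    rw [hB]

variable (hconn : 𝒜 0 = Submodule.span k {(1 : H)})
    (hcomul : ∀ n : ℕ, ∀ x ∈ 𝒜 n, Coalgebra.comul (R := k) x ∈
      ⨆ p ∈ Finset.range (n + 1),
        LinearMap.range (TensorProduct.map (𝒜 p).subtype (𝒜 (n - p)).subtype))

lemma Sseq_zero_apply (x : H) : Sseq hcompl γ 0 x = cunit k H A x := rfl

lemma Sseq_succ_apply (n : ℕ) (x : H) :
    Sseq hcompl γ (n+1) x = cunit k H A x
      - piL Aneg Apos hcompl (conv (Sseq hcompl γ n) (phi k H A γ) x) := rfl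

include hconn hcomul

lemma Sseq_succ_eq : ∀ n : ℕ, ∀ p ≤ n, ∀ x ∈ 𝒜 p,
    Sseq hcompl γ (n+1) x = Sseq hcompl γ n x := by
  intro n
  induction n using Nat.strong_induction_on with
  | _ n IH =>
    intro p hpn x hx
    match n, hpn with
    | 0, hpn =>
      have hp0 : p = 0 := by omega
      subst hp0
      rw [Sseq_succ_apply, Sseq_zero_apply,
        conv_phi_zero_deg 𝒜 γ _ hconn hx, map_zero, sub_zero]
    | (m+1), hpn =>
      rw [Sseq_succ_apply, Sseq_succ_apply]
      have : conv (Sseq hcompl γ (m+1)) (phi k H A γ) x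
          = conv (Sseq hcompl γ m) (phi k H A γ) x := by
        apply conv_phi_congr 𝒜 γ hconn hcomul _ _ p x hx
        intro q hq z hz
        exact IH m (by omega) q (by omega) z hz
      rw [this]

lemma Sseq_le_eq : ∀ n p, p ≤ n → ∀ x ∈ 𝒜 p,
    Sseq hcompl γ n x = Sseq hcompl γ p x := by
  intro n
  induction n with
  | zero =>
    intro p hp x hx
    obtain rfl : p = 0 := Nat.le_zero.mp hp
    rfl
  | succ m IH =>
    intro p hp x hx
    rcases Nat.lt_or_ge p (m+1) with h | h
    · rw [Sseq_succ_eq 𝒜 hcompl γ hconn hcomul m p (by omega) x hx]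
      exact IH p (by omega) x hx
    · have : p = m + 1 := by omega
      subst this; rfl

lemma gm_eq_Sseq {n p : ℕ} (hpn : p ≤ n) {x : H} (hx : x ∈ 𝒜 p) :
    gm 𝒜 hcompl γ x = Sseq hcompl γ n x := by
  rw [gm_of_mem 𝒜 hcompl γ hx, Sseq_le_eq 𝒜 hcompl γ hconn hcomul n p hpn x hx]

lemma gm_fix : gm 𝒜 hcompl γ = cunit k H A
    - piL Aneg Apos hcompl ∘ₗ conv (gm 𝒜 hcompl γ) (phi k H A γ) := by
  apply ext_graded 𝒜
  intro p x hx
  simp only [LinearMap.sub_apply, LinearMap.comp_apply]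
  match p, hx with
  | 0, hx =>
    rw [gm_of_mem 𝒜 hcompl γ hx, Sseq_zero_apply,
      conv_phi_zero_deg 𝒜 γ _ hconn hx, map_zero, sub_zero]
  | (m+1), hx =>
    rw [gm_of_mem 𝒜 hcompl γ hx, Sseq_succ_apply]
    have : conv (gm 𝒜 hcompl γ) (phi k H A γ) x
        = conv (Sseq hcompl γ m) (phi k H A γ) x := by
      apply conv_phi_congr 𝒜 γ hconn hcomul _ _ (m+1) x hx
      intro q hq z hz
      exact gm_eq_Sseq 𝒜 hcompl γ hconn hcomul (by omega) hz
    rw [this]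

lemma gm_fix_apply (x : H) :
    gm 𝒜 hcompl γ x = cunit k H A x
      - piL Aneg Apos hcompl (conv (gm 𝒜 hcompl γ) (phi k H A γ) x) := by
  have := congr($(gm_fix 𝒜 hcompl γ hconn hcomul) x)
  simpa using this

omit hconn hcomul

lemma gm_one : gm 𝒜 hcompl γ 1 = 1 := by
  rw [gm_of_mem 𝒜 hcompl γ (one_mem_deg0 𝒜), Sseq_zero_apply, cunit_apply,
    Bialgebra.counit_one, one_smul]

include hconn hcomul

lemma fix_unique (α β : H →ₗ[k] A)
    (hα : α = cunit k H A - piL Aneg Apos hcompl ∘ₗ conv α (phi k H A γ))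
    (hβ : β = cunit k H A - piL Aneg Apos hcompl ∘ₗ conv β (phi k H A γ)) :
    α = β := by
  apply ext_graded 𝒜
  intro p
  induction p using Nat.strong_induction_on with
  | _ p IH =>
    intro x hx
    have hc : conv α (phi k H A γ) x = conv β (phi k H A γ) x := by
      apply conv_phi_congr 𝒜 γ hconn hcomul _ _ p x hx
      intro q hq z hz
      exact IH q hq z hz
    calc α x = cunit k H A x - piL Aneg Apos hcompl (conv α (phi k H A γ) x) := by
          conv_lhs => rw [hα]
          simp
      _ = cunit k H A x - piL Aneg Apos hcompl (conv β (phi k H A γ) x) := by rw [hc]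
      _ = β x := by conv_rhs => rw [hβ]; simp
      
lemma g_eq_h_on_Dred (n' : ℕ) {w : H ⊗[k] H} (hw : w ∈ Dred 𝒜 n') :
    (LinearMap.mul' k A ∘ₗ TensorProduct.map (gm 𝒜 hcompl γ) (phi k H A γ)) w
      = (LinearMap.mul' k A ∘ₗ TensorProduct.map (gm 𝒜 hcompl γ) γ.toLinearMap) w := by
  have hle : Dred 𝒜 n' ≤ LinearMap.eqLocus
      (LinearMap.mul' k A ∘ₗ TensorProduct.map (gm 𝒜 hcompl γ) (phi k H A γ))
      (LinearMap.mul' k A ∘ₗ TensorProduct.map (gm 𝒜 hcompl γ) γ.toLinearMap) := by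
    rw [Dred, Submodule.span_le]
    rintro _ ⟨p, q, hpq, hp, hq, u, hu, v, hv, rfl⟩
    simp only [SetLike.mem_coe, LinearMap.mem_eqLocus, LinearMap.comp_apply,
      TensorProduct.map_tmul, LinearMap.mul'_apply, AlgHom.toLinearMap_apply]
    rw [phi_apply, counit_pos_deg 𝒜 hconn hcomul hq hv, zero_smul, sub_zero]
  exact hle hw

lemma gm_neg_pi {n : ℕ} (hn : 0 < n) {x : H} (hx : x ∈ 𝒜 n) :
    gm 𝒜 hcompl γ x
      = - piL Aneg Apos hcompl (conv (gm 𝒜 hcompl γ) (phi k H A γ) x) := by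
  rw [gm_fix_apply 𝒜 hcompl γ hconn hcomul x, cunit_apply,
    counit_pos_deg 𝒜 hconn hcomul hn hx, zero_smul, zero_sub]

lemma gm_mul (a b : H) :
    gm 𝒜 hcompl γ (a * b) = gm 𝒜 hcompl γ a * gm 𝒜 hcompl γ b := by
  classical
  set G := gm 𝒜 hcompl γ with hG
  set Φ := phi k H A γ with hΦ
  set π := piL Aneg Apos hcompl with hπ
  set g := LinearMap.mul' k A ∘ₗ TensorProduct.map G Φ with hg
  set h := LinearMap.mul' k A ∘ₗ TensorProduct.map G γ.toLinearMap with hh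
  have g_tmul : ∀ a b : H, g (a ⊗ₜ[k] b) = G a * Φ b := by
    intro a b; simp [hg, LinearMap.mul'_apply]
  have h_tmul : ∀ a b : H, h (a ⊗ₜ[k] b) = G a * γ b := by
    intro a b; simp [hh, LinearMap.mul'_apply]
  have main : ∀ N : ℕ, ∀ m n : ℕ, m + n = N → ∀ x ∈ 𝒜 m, ∀ y ∈ 𝒜 n,
      G (x * y) = G x * G y := by
    intro N
    induction N using Nat.strong_induction_on with
    | _ N IH =>
      intro m n hmn x hx y hy
      rcases Nat.eq_zero_or_pos m with hm | hm
      · subst hm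
        have hx1 := mem_deg0 𝒜 hconn hx
        rw [hx1, smul_mul_assoc, one_mul, map_smul, map_smul, smul_mul_assoc,
          gm_one, one_mul]
      rcases Nat.eq_zero_or_pos n with hn | hn
      · subst hn
        have hy1 := mem_deg0 𝒜 hconn hy
        rw [hy1, mul_smul_comm, map_smul, map_smul, mul_smul_comm,
          gm_one, mul_one, mul_one]
      -- main case : m, n ≥ 1
      obtain ⟨w, hwD, hwx⟩ := comul_eq 𝒜 hconn hcomul hm hx
      obtain ⟨v, hvD, hwy⟩ := comul_eq 𝒜 hconn hcomul hn hy
      have hxy : x * y ∈ 𝒜 (m + n) := SetLike.mul_mem_graded hx hy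
      have hεx : Coalgebra.counit (R := k) x = 0 :=
        counit_pos_deg 𝒜 hconn hcomul hm hx
      have hεy : Coalgebra.counit (R := k) y = 0 :=
        counit_pos_deg 𝒜 hconn hcomul hn hy
      have hΦx : Φ x = γ x := by rw [hΦ, phi_apply, hεx, zero_smul, sub_zero]
      have hΦy : Φ y = γ y := by rw [hΦ, phi_apply, hεy, zero_smul, sub_zero]
      have hΦxy : Φ (x * y) = γ x * γ y := by
        rw [hΦ, phi_apply, counit_pos_deg 𝒜 hconn hcomul (by omega) hxy,
          zero_smul, sub_zero, map_mul]
      -- value of R on x and y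
      have hRx : conv G Φ x = γ x + h w := by
        rw [conv_eval G Φ hwx, hΦ, phi_one, mul_zero, hG, gm_one, one_mul, ← hΦ,
          ← hg, hΦx, g_eq_h_on_Dred 𝒜 hcompl γ hconn hcomul m hwD, ← hh,
          zero_add]
      have hRy : conv G Φ y = γ y + h v := by
        rw [conv_eval G Φ hwy, hΦ, phi_one, mul_zero, hG, gm_one, one_mul, ← hΦ,
          ← hg, hΦy, g_eq_h_on_Dred 𝒜 hcompl γ hconn hcomul n hvD, ← hh,
          zero_add]
      -- the nine terms
      have A5 : g ((x ⊗ₜ[k] (1:H)) * v) = G x * h v := by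
        have hle : Dred 𝒜 n ≤ LinearMap.eqLocus
            (g ∘ₗ LinearMap.mulLeft k (x ⊗ₜ[k] (1:H)))
            (LinearMap.mulLeft k (G x) ∘ₗ h) := by
          rw [Dred, Submodule.span_le]
          rintro _ ⟨p, q, hpq, hp, hq, u, hu, v', hv', rfl⟩
          simp only [SetLike.mem_coe, LinearMap.mem_eqLocus, LinearMap.comp_apply,
            LinearMap.mulLeft_apply, Algebra.TensorProduct.tmul_mul_tmul, one_mul]
          rw [g_tmul, h_tmul]
          have hΦv' : Φ v' = γ v' := by
            rw [hΦ, phi_apply, counit_pos_deg 𝒜 hconn hcomul hq hv', zero_smul,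
              sub_zero]
          rw [hΦv', IH (m + p) (by omega) m p rfl x hx u hu, mul_assoc]
        have := hle hvD
        simpa using this
      have A6 : g (((1:H) ⊗ₜ[k] x) * v) = γ x * h v := by
        have hle : Dred 𝒜 n ≤ LinearMap.eqLocus
            (g ∘ₗ LinearMap.mulLeft k ((1:H) ⊗ₜ[k] x))
            (LinearMap.mulLeft k (γ x) ∘ₗ h) := by
          rw [Dred, Submodule.span_le]
          rintro _ ⟨p, q, hpq, hp, hq, u, hu, v', hv', rfl⟩
          simp only [SetLike.mem_coe, LinearMap.mem_eqLocus, LinearMap.comp_apply,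
            LinearMap.mulLeft_apply, Algebra.TensorProduct.tmul_mul_tmul, one_mul]
          rw [g_tmul, h_tmul]
          have hxv' : x * v' ∈ 𝒜 (m + q) := SetLike.mul_mem_graded hx hv'
          have hΦ2 : Φ (x * v') = γ x * γ v' := by
            rw [hΦ, phi_apply, counit_pos_deg 𝒜 hconn hcomul (by omega) hxv',
              zero_smul, sub_zero, map_mul]
          rw [hΦ2]
          ring
        have := hle hvD
        simpa using this
      have A7 : g (w * (y ⊗ₜ[k] (1:H))) = G y * h w := by
        have hle : Dred 𝒜 m ≤ LinearMap.eqLocus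
            (g ∘ₗ LinearMap.mulRight k (y ⊗ₜ[k] (1:H)))
            (LinearMap.mulLeft k (G y) ∘ₗ h) := by
          rw [Dred, Submodule.span_le]
          rintro _ ⟨p, q, hpq, hp, hq, u, hu, v', hv', rfl⟩
          simp only [SetLike.mem_coe, LinearMap.mem_eqLocus, LinearMap.comp_apply,
            LinearMap.mulRight_apply, LinearMap.mulLeft_apply,
            Algebra.TensorProduct.tmul_mul_tmul, mul_one]
          rw [g_tmul, h_tmul]
          have hΦv' : Φ v' = γ v' := by
            rw [hΦ, phi_apply, counit_pos_deg 𝒜 hconn hcomul hq hv', zero_smul,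
              sub_zero]
          rw [hΦv', IH (p + n) (by omega) p n rfl u hu y hy]
          ring
        have := hle hwD
        simpa using this
      have A8 : g (w * ((1:H) ⊗ₜ[k] y)) = γ y * h w := by
        have hle : Dred 𝒜 m ≤ LinearMap.eqLocus
            (g ∘ₗ LinearMap.mulRight k ((1:H) ⊗ₜ[k] y))
            (LinearMap.mulLeft k (γ y) ∘ₗ h) := by
          rw [Dred, Submodule.span_le]
          rintro _ ⟨p, q, hpq, hp, hq, u, hu, v', hv', rfl⟩
          simp only [SetLike.mem_coe, LinearMap.mem_eqLocus, LinearMap.comp_apply,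
            LinearMap.mulRight_apply, LinearMap.mulLeft_apply,
            Algebra.TensorProduct.tmul_mul_tmul, mul_one, one_mul]
          rw [g_tmul, h_tmul]
          have hv'y : v' * y ∈ 𝒜 (q + n) := SetLike.mul_mem_graded hv' hy
          have hΦ2 : Φ (v' * y) = γ v' * γ y := by
            rw [hΦ, phi_apply, counit_pos_deg 𝒜 hconn hcomul (by omega) hv'y,
              zero_smul, sub_zero, map_mul]
          rw [hΦ2]
          ring
        have := hle hwD
        simpa using this
      have A9 : g (w * v) = h w * h v := by
        -- first for pure generators of Dred m, all v ∈ Dred n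
        have inner : ∀ p q : ℕ, p + q = m → 0 < p → 0 < q →
            ∀ u ∈ 𝒜 p, ∀ u' ∈ 𝒜 q,
            g ((u ⊗ₜ[k] u') * v) = h (u ⊗ₜ[k] u') * h v := by
          intro p q hpq hp hq u hu u' hu'
          have hle : Dred 𝒜 n ≤ LinearMap.eqLocus
              (g ∘ₗ LinearMap.mulLeft k (u ⊗ₜ[k] u'))
              (LinearMap.mulLeft k (h (u ⊗ₜ[k] u')) ∘ₗ h) := by
            rw [Dred, Submodule.span_le]
            rintro _ ⟨p', q', hpq', hp', hq', z, hz, z', hz', rfl⟩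
            simp only [SetLike.mem_coe, LinearMap.mem_eqLocus, LinearMap.comp_apply,
              LinearMap.mulLeft_apply, Algebra.TensorProduct.tmul_mul_tmul]
            rw [g_tmul, h_tmul, h_tmul]
            have h2 : u' * z' ∈ 𝒜 (q + q') := SetLike.mul_mem_graded hu' hz'
            have hΦ2 : Φ (u' * z') = γ u' * γ z' := by
              rw [hΦ, phi_apply, counit_pos_deg 𝒜 hconn hcomul (by omega) h2,
                zero_smul, sub_zero, map_mul]
            rw [hΦ2, IH (p + p') (by omega) p p' rfl u hu z hz]
            ring
          have := hle hvD
          simpa using this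
        have hle : Dred 𝒜 m ≤ LinearMap.eqLocus
            (g ∘ₗ LinearMap.mulRight k v)
            (LinearMap.mulRight k (h v) ∘ₗ h) := by
          rw [Dred, Submodule.span_le]
          rintro _ ⟨p, q, hpq, hp, hq, u, hu, u', hu', rfl⟩
          simp only [SetLike.mem_coe, LinearMap.mem_eqLocus, LinearMap.comp_apply,
            LinearMap.mulRight_apply]
          exact inner p q hpq hp hq u hu u' hu'
        have := hle hwD
        simpa using this
      -- assemble
      have hKey : conv G Φ (x * y)
          = G x * conv G Φ y + conv G Φ x * G y + conv G Φ x * conv G Φ y := by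
        have hcm : Coalgebra.comul (R := k) (x * y)
            = (x ⊗ₜ[k] (1:H) + (1:H) ⊗ₜ[k] x + w) * (y ⊗ₜ[k] (1:H) + (1:H) ⊗ₜ[k] y + v) := by
          rw [Bialgebra.comul_mul, hwx, hwy]
        have hexp : conv G Φ (x * y) =
            g ((x ⊗ₜ[k] (1:H)) * (y ⊗ₜ[k] (1:H)))
            + g ((x ⊗ₜ[k] (1:H)) * ((1:H) ⊗ₜ[k] y))
            + g ((x ⊗ₜ[k] (1:H)) * v)
            + g (((1:H) ⊗ₜ[k] x) * (y ⊗ₜ[k] (1:H)))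
            + g (((1:H) ⊗ₜ[k] x) * ((1:H) ⊗ₜ[k] y))
            + g (((1:H) ⊗ₜ[k] x) * v)
            + g (w * (y ⊗ₜ[k] (1:H)))
            + g (w * ((1:H) ⊗ₜ[k] y))
            + g (w * v) := by
          rw [conv_apply, hcm]
          have : (x ⊗ₜ[k] (1:H) + (1:H) ⊗ₜ[k] x + w) * (y ⊗ₜ[k] (1:H) + (1:H) ⊗ₜ[k] y + v)
              = (x ⊗ₜ[k] (1:H)) * (y ⊗ₜ[k] (1:H))
              + (x ⊗ₜ[k] (1:H)) * ((1:H) ⊗ₜ[k] y)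
              + (x ⊗ₜ[k] (1:H)) * v
              + ((1:H) ⊗ₜ[k] x) * (y ⊗ₜ[k] (1:H))
              + ((1:H) ⊗ₜ[k] x) * ((1:H) ⊗ₜ[k] y)
              + ((1:H) ⊗ₜ[k] x) * v
              + w * (y ⊗ₜ[k] (1:H))
              + w * ((1:H) ⊗ₜ[k] y)
              + w * v := by ring
          rw [this]
          simp only [map_add]
          rfl
        have B1 : g ((x ⊗ₜ[k] (1:H)) * (y ⊗ₜ[k] (1:H))) = 0 := by
          rw [Algebra.TensorProduct.tmul_mul_tmul, one_mul, g_tmul, hΦ, phi_one,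
            mul_zero]
        have B2 : g ((x ⊗ₜ[k] (1:H)) * ((1:H) ⊗ₜ[k] y)) = G x * γ y := by
          rw [Algebra.TensorProduct.tmul_mul_tmul, one_mul, mul_one, g_tmul, hΦy]
        have B3 : g (((1:H) ⊗ₜ[k] x) * (y ⊗ₜ[k] (1:H))) = G y * γ x := by
          rw [Algebra.TensorProduct.tmul_mul_tmul, one_mul, mul_one, g_tmul, hΦx]
        have B4 : g (((1:H) ⊗ₜ[k] x) * ((1:H) ⊗ₜ[k] y)) = γ x * γ y := by
          rw [Algebra.TensorProduct.tmul_mul_tmul, one_mul, g_tmul, hG, gm_one,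
            one_mul, hΦxy]
        rw [hexp, B1, B2, B3, B4, A5, A6, A7, A8, A9, hRx, hRy]
        ring
      have hGxy : G (x * y) = - π (conv G Φ (x * y)) :=
        gm_neg_pi 𝒜 hcompl γ hconn hcomul (by omega) hxy
      have hGx : G x = - π (conv G Φ x) := gm_neg_pi 𝒜 hcompl γ hconn hcomul hm hx
      have hGy : G y = - π (conv G Φ y) := gm_neg_pi 𝒜 hcompl γ hconn hcomul hn hy
      have hπx : π (conv G Φ x) = - G x := by rw [hGx, neg_neg]
      have hπy : π (conv G Φ y) = - G y := by rw [hGy, neg_neg]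
      have final : G x * G y
          = - π (G x * conv G Φ y + conv G Φ x * G y + conv G Φ x * conv G Φ y) := by
        calc G x * G y = π (conv G Φ x) * π (conv G Φ y) := by
              rw [hπx, hπy, neg_mul_neg]
          _ = π (π (conv G Φ x) * conv G Φ y + conv G Φ x * π (conv G Φ y)
                - conv G Φ x * conv G Φ y) := by
              rw [hπ]; exact piL_rotaBaxter hcompl _ _
          _ = π (-(G x * conv G Φ y + conv G Φ x * G y
                + conv G Φ x * conv G Φ y)) := by
              rw [hπx, hπy]; congr 1; ring
          _ = - π (G x * conv G Φ y + conv G Φ x * G y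
                + conv G Φ x * conv G Φ y) := map_neg _ _
      rw [hGxy, hKey, final]
  conv_lhs => rw [← DirectSum.sum_support_decompose 𝒜 a,
    ← DirectSum.sum_support_decompose 𝒜 b, Finset.sum_mul_sum, map_sum]
  conv_rhs => rw [← DirectSum.sum_support_decompose 𝒜 a,
    ← DirectSum.sum_support_decompose 𝒜 b, map_sum, map_sum, Finset.sum_mul_sum]
  refine Finset.sum_congr rfl fun i _ => ?_
  rw [map_sum]
  exact Finset.sum_congr rfl fun j _ =>
    main _ _ _ rfl _ (SetLike.coe_mem _) _ (SetLike.coe_mem _)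

end Construction

lemma ext_one_ker {M : Type*} [AddCommMonoid M] [Module k M] {f g : H →ₗ[k] M}
    (h1 : f 1 = g 1)
    (h2 : ∀ x ∈ LinearMap.ker (Coalgebra.counit (R := k) (A := H)), f x = g x) :
    f = g := by
  ext x
  have hker : x - Coalgebra.counit (R := k) x • (1 : H)
      ∈ LinearMap.ker (Coalgebra.counit (R := k) (A := H)) := by
    simp [LinearMap.mem_ker, Bialgebra.counit_one]
  have hx : x = Coalgebra.counit (R := k) x • (1 : H)
      + (x - Coalgebra.counit (R := k) x • (1 : H)) := by abel
  calc f x = Coalgebra.counit (R := k) x • f 1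
        + f (x - Coalgebra.counit (R := k) x • (1 : H)) := by
        conv_lhs => rw [hx]
        rw [map_add, map_smul]
    _ = Coalgebra.counit (R := k) x • g 1
        + g (x - Coalgebra.counit (R := k) x • (1 : H)) := by
        rw [h1, h2 _ hker]
    _ = g x := by
        rw [← map_smul, ← map_add, ← hx]

end Birkhoff

open Birkhoff

/-- Let `H` be a connected graded commutative Hopf algebra and `A` a
commutative algebra decomposed as `A = A₋ ⊕ A₊` with `A₋` a (non-unital) subalgebra
and `A₊` a unital subalgebra.  Then every algebra homomorphism `γ : H → A` admits a
unique Birkhoff decomposition `γ = γ₋^{⋆−1} ⋆ γ₊ = (γ₋ ∘ S) ⋆ γ₊` with `γ₋, γ₊`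
algebra homomorphisms, `γ₋(ker ε) ⊆ A₋`, `γ₊(H) ⊆ A₊` (and `γ₋(1) = 1`). -/
theorem birkhoff_decomposition
    (𝒜 : ℕ → Submodule k H) [GradedAlgebra 𝒜]
    (hconn : 𝒜 0 = Submodule.span k {(1 : H)})
    (hcomul : ∀ n : ℕ, ∀ x ∈ 𝒜 n, Coalgebra.comul (R := k) x ∈
      ⨆ p ∈ Finset.range (n + 1),
        LinearMap.range (TensorProduct.map (𝒜 p).subtype (𝒜 (n - p)).subtype))
    (Aneg : NonUnitalSubalgebra k A) (Apos : Subalgebra k A)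
    (hcompl : IsCompl Aneg.toSubmodule (Subalgebra.toSubmodule Apos))
    (γ : H →ₐ[k] A) :
    ∃! p : (H →ₐ[k] A) × (H →ₐ[k] A),
      (∀ x ∈ LinearMap.ker (Coalgebra.counit (R := k) (A := H)),
          p.1 x ∈ Aneg) ∧
      (∀ x : H, p.2 x ∈ Apos) ∧
      conv (p.1.toLinearMap ∘ₗ HopfAlgebra.antipode (R := k)) p.2.toLinearMap
        = γ.toLinearMap := by
  classical
  -- the candidate maps
  let gmA : H →ₐ[k] A := AlgHom.ofLinearMap (gm 𝒜 hcompl γ)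
    (gm_one 𝒜 hcompl γ) (gm_mul 𝒜 hcompl γ hconn hcomul)
  have hgmA : gmA.toLinearMap = gm 𝒜 hcompl γ := rfl
  let gpA : H →ₐ[k] A := AlgHom.ofLinearMap
    (conv (gm 𝒜 hcompl γ) γ.toLinearMap)
    (by rw [← hgmA]; exact conv_algHom_one gmA γ)
    (by intro x y; rw [← hgmA]; exact conv_algHom_mul gmA γ x y)
  have hgpA : gpA.toLinearMap = conv (gm 𝒜 hcompl γ) γ.toLinearMap := rfl
  -- decomposition of γ as a sum
  have hγsplit : γ.toLinearMap = phi k H A γ + cunit k H A := by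
    rw [phi]; abel
  have hconv_split : ∀ δ : H →ₗ[k] A,
      conv δ γ.toLinearMap = conv δ (phi k H A γ) + δ := by
    intro δ
    rw [hγsplit, conv_add_right, conv_cunit_right]
  refine ⟨(gmA, gpA), ⟨?_, ?_, ?_⟩, ?_⟩
  · -- gmA maps ker counit into Aneg
    intro x hx
    show gm 𝒜 hcompl γ x ∈ Aneg
    rw [gm_fix_apply 𝒜 hcompl γ hconn hcomul x, cunit_apply,
      LinearMap.mem_ker.1 hx, zero_smul, zero_sub]
    exact neg_mem (piL_mem hcompl _)
  · -- gpA maps into Apos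
    intro x
    show conv (gm 𝒜 hcompl γ) γ.toLinearMap x ∈ Apos
    rw [hconv_split]
    simp only [LinearMap.add_apply]
    rw [gm_fix_apply 𝒜 hcompl γ hconn hcomul x]
    have : conv (gm 𝒜 hcompl γ) (phi k H A γ) x
          + (cunit k H A x
            - piL Aneg Apos hcompl (conv (gm 𝒜 hcompl γ) (phi k H A γ) x))
        = cunit k H A x
          + (conv (gm 𝒜 hcompl γ) (phi k H A γ) x
            - piL Aneg Apos hcompl (conv (gm 𝒜 hcompl γ) (phi k H A γ) x)) := by
      abel
    rw [this]
    refine add_mem ?_ (sub_piL_mem hcompl _)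
    rw [cunit_apply]
    exact Submodule.smul_mem _ _ (show (1:A) ∈ Subalgebra.toSubmodule Apos from Apos.one_mem)
  · -- the convolution identity
    show conv (gmA.toLinearMap ∘ₗ HopfAlgebra.antipode (R := k))
      (conv (gm 𝒜 hcompl γ) γ.toLinearMap) = γ.toLinearMap
    rw [← hgmA, ← conv_assoc, conv_antipode_left gmA, conv_cunit_left]
  · -- uniqueness
    rintro ⟨δm, δp⟩ ⟨hq1, hq2, hq3⟩
    have hU1 : δp.toLinearMap = conv δm.toLinearMap γ.toLinearMap := by
      rw [← hq3, ← conv_assoc, conv_antipode_right δm, conv_cunit_left]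
    have hU2 : δm.toLinearMap = cunit k H A
        - piL Aneg Apos hcompl ∘ₗ conv δm.toLinearMap (phi k H A γ) := by
      apply ext_one_ker
      · simp only [AlgHom.toLinearMap_apply, map_one, LinearMap.sub_apply,
          LinearMap.comp_apply]
        have hc1 : conv δm.toLinearMap (phi k H A γ) 1 = 0 := by
          rw [conv_apply, Bialgebra.comul_one, Algebra.TensorProduct.one_def]
          simp [LinearMap.mul'_apply, phi_one]
        rw [hc1, map_zero, sub_zero, cunit_apply, Bialgebra.counit_one, one_smul]
      · intro x hx
        have he : Coalgebra.counit (R := k) x = 0 := LinearMap.mem_ker.1 hx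
        have hδp : δp x = δm x + conv δm.toLinearMap (phi k H A γ) x := by
          have := congr($hU1 x)
          rw [hconv_split] at this
          simpa [add_comm] using this
        have hmem : δm x ∈ Aneg := hq1 x hx
        have h0 : piL Aneg Apos hcompl (δp x) = 0 := piL_right hcompl (hq2 x)
        rw [hδp, map_add, piL_left hcompl hmem] at h0
        simp only [LinearMap.sub_apply, LinearMap.comp_apply, cunit_apply, he,
          zero_smul, zero_sub, AlgHom.toLinearMap_apply]
        linear_combination h0
    have hU3 : δm.toLinearMap = gm 𝒜 hcompl γ := by
      apply fix_unique 𝒜 hcompl γ hconn hcomul _ _ hU2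
      exact gm_fix 𝒜 hcompl γ hconn hcomul
    have hδm : δm = gmA := by
      apply AlgHom.toLinearMap_injective
      rw [hU3, hgmA]
    have hδp : δp = gpA := by
      apply AlgHom.toLinearMap_injective
      rw [hU1, hU3, hgpA]
    rw [hδm, hδp]
end

section
/- Let H be a graded connected Hopf algebra with grading operator Y, and S its antipode. Then S ⋆ Y (the convolution of the antipode with the grading operator), i.e., the map x ↦ m((S⊗Y)Δx), annihilates products: (S ⋆ Y)(xy) = 0 for all x, y in the augmentation ideal of H. -/
open TensorProduct

section Helpers

variable {k H : Type*} [CommRing k] [CommRing H] [HopfAlgebra k H]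
open Coalgebra HopfAlgebra Bialgebra

lemma repr_smul_left {a : H} (r : Coalgebra.Repr k a (H × H)) :
    ∑ i ∈ r.index, counit (R := k) (r.right i) • r.left i = a := by
  have h := congrArg (TensorProduct.rid k H) (Coalgebra.sum_tmul_counit_eq r)
  simpa only [map_sum, TensorProduct.rid_tmul, one_smul] using h

lemma repr_smul_right {a : H} (r : Coalgebra.Repr k a (H × H)) :
    ∑ i ∈ r.index, counit (R := k) (r.left i) • r.right i = a := by
  have h := congrArg (TensorProduct.lid k H) (Coalgebra.sum_counit_tmul_eq r)
  simpa only [map_sum, TensorProduct.lid_tmul, one_smul] using h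

lemma comul_mul_repr {c d : H} (rc : Coalgebra.Repr k c (H × H)) (rd : Coalgebra.Repr k d (H × H)) :
    Coalgebra.comul (R := k) (c * d) =
      ∑ i ∈ rc.index, ∑ j ∈ rd.index,
        (rc.left i * rd.left j) ⊗ₜ[k] (rc.right i * rd.right j) := by
  rw [Bialgebra.comul_mul, ← rc.eq, ← rd.eq, Finset.sum_mul_sum]
  simp [Algebra.TensorProduct.tmul_mul_tmul]

lemma antipode_repr_mul_eq {c d : H} (rc : Coalgebra.Repr k c (H × H)) (rd : Coalgebra.Repr k d (H × H)) :
    ∑ i ∈ rc.index, ∑ j ∈ rd.index,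
        antipode (R := k) (rc.left i * rd.left j) * (rc.right i * rd.right j) =
      algebraMap k H (counit (R := k) c) * algebraMap k H (counit (R := k) d) := by
  have h2 := HopfAlgebra.mul_antipode_rTensor_comul_apply (R := k) (a := c * d)
  rw [comul_mul_repr rc rd] at h2
  simpa [map_sum, LinearMap.mul'_apply] using h2

lemma coassoc_mul_repr {a : H} (r : Coalgebra.Repr k a (H × H))
    (r1 : (i : H × H) → Coalgebra.Repr k (r.left i) (H × H))
    (r2 : (i : H × H) → Coalgebra.Repr k (r.right i) (H × H))
    (f g h : H →ₗ[k] H) :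
    ∑ i ∈ r.index, ∑ p ∈ (r2 i).index,
        f (r.left i) * (g ((r2 i).left p) * h ((r2 i).right p)) =
      ∑ i ∈ r.index, ∑ q ∈ (r1 i).index,
        f ((r1 i).left q) * (g ((r1 i).right q) * h (r.right i)) := by
  have h3 := Coalgebra.sum_map_tmul_tmul_eq (R := k) f g h a (repr := r) (a₁ := r1) (a₂ := r2)
  have h4 := congrArg
    (fun t => (LinearMap.mul' k H) ((LinearMap.lTensor H (LinearMap.mul' k H)) t)) h3
  simpa [map_sum, LinearMap.mul'_apply] using h4

lemma sum_swap_blocks {M : Type*} [AddCommMonoid M] {α β : Type*} {γ : α → Type*}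
    {δ : β → Type*} (sA : Finset α) (sB : Finset β) (tA : ∀ i, Finset (γ i))
    (tB : ∀ j, Finset (δ j)) (F : (i : α) → γ i → (j : β) → δ j → M) :
    ∑ j ∈ sB, ∑ q ∈ tB j, ∑ i ∈ sA, ∑ r ∈ tA i, F i r j q
      = ∑ i ∈ sA, ∑ r ∈ tA i, ∑ j ∈ sB, ∑ q ∈ tB j, F i r j q := by
  calc ∑ j ∈ sB, ∑ q ∈ tB j, ∑ i ∈ sA, ∑ r ∈ tA i, F i r j q
      = ∑ j ∈ sB, ∑ i ∈ sA, ∑ q ∈ tB j, ∑ r ∈ tA i, F i r j q :=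
        Finset.sum_congr rfl fun j _ => Finset.sum_comm
    _ = ∑ i ∈ sA, ∑ j ∈ sB, ∑ q ∈ tB j, ∑ r ∈ tA i, F i r j q := Finset.sum_comm
    _ = ∑ i ∈ sA, ∑ j ∈ sB, ∑ r ∈ tA i, ∑ q ∈ tB j, F i r j q :=
        Finset.sum_congr rfl fun i _ => Finset.sum_congr rfl fun j _ => Finset.sum_comm
    _ = ∑ i ∈ sA, ∑ r ∈ tA i, ∑ j ∈ sB, ∑ q ∈ tB j, F i r j q :=
        Finset.sum_congr rfl fun i _ => Finset.sum_comm

lemma antipode_mul_comm (a b : H) :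
    antipode (R := k) (a * b) = antipode (R := k) (A := H) a * antipode (R := k) b := by
  have ra : Coalgebra.Repr k a (H × H) := Coalgebra.Repr.arbitrary k a
  have rb : Coalgebra.Repr k b (H × H) := Coalgebra.Repr.arbitrary k b
  have ra1 : (i : H × H) → Coalgebra.Repr k (ra.left i) (H × H) := fun i => Coalgebra.Repr.arbitrary k _
  have ra2 : (i : H × H) → Coalgebra.Repr k (ra.right i) (H × H) := fun i => Coalgebra.Repr.arbitrary k _
  have rb1 : (j : H × H) → Coalgebra.Repr k (rb.left j) (H × H) := fun j => Coalgebra.Repr.arbitrary k _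
  have rb2 : (j : H × H) → Coalgebra.Repr k (rb.right j) (H × H) := fun j => Coalgebra.Repr.arbitrary k _
  -- the master sum
  have key : (∑ j ∈ rb.index, ∑ q ∈ (rb2 j).index, ∑ i ∈ ra.index, ∑ p ∈ (ra2 i).index,
      antipode (R := k) (ra.left i * rb.left j) *
        (((ra2 i).left p * (rb2 j).left q) *
          (antipode (R := k) ((rb2 j).right q) * antipode (R := k) ((ra2 i).right p))))
      = antipode (R := k) (a * b) := by
    calc
      _ = ∑ j ∈ rb.index, ∑ q ∈ (rb2 j).index, ∑ i ∈ ra.index,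
            (antipode (R := k) (ra.left i * rb.left j) *
              ((rb2 j).left q * antipode (R := k) ((rb2 j).right q))) *
            (∑ p ∈ (ra2 i).index, (ra2 i).left p * antipode (R := k) ((ra2 i).right p)) := by
        refine Finset.sum_congr rfl fun j _ => Finset.sum_congr rfl fun q _ =>
          Finset.sum_congr rfl fun i _ => ?_
        rw [Finset.mul_sum]
        exact Finset.sum_congr rfl fun p _ => by ring
      _ = ∑ j ∈ rb.index, ∑ q ∈ (rb2 j).index, ∑ i ∈ ra.index,
            (antipode (R := k) (ra.left i * rb.left j) *
              ((rb2 j).left q * antipode (R := k) ((rb2 j).right q))) *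
            algebraMap k H (counit (R := k) (ra.right i)) := by
        refine Finset.sum_congr rfl fun j _ => Finset.sum_congr rfl fun q _ =>
          Finset.sum_congr rfl fun i _ => ?_
        rw [sum_mul_antipode_eq_algebraMap_counit (ra2 i)]
      _ = ∑ j ∈ rb.index, ∑ i ∈ ra.index,
            (antipode (R := k) (ra.left i * rb.left j) *
              algebraMap k H (counit (R := k) (ra.right i))) *
            (∑ q ∈ (rb2 j).index, (rb2 j).left q * antipode (R := k) ((rb2 j).right q)) := by
        refine Finset.sum_congr rfl fun j _ => ?_
        rw [Finset.sum_comm]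
        refine Finset.sum_congr rfl fun i _ => ?_
        rw [Finset.mul_sum]
        exact Finset.sum_congr rfl fun q _ => by ring
      _ = ∑ j ∈ rb.index, ∑ i ∈ ra.index,
            (antipode (R := k) (ra.left i * rb.left j) *
              algebraMap k H (counit (R := k) (ra.right i))) *
            algebraMap k H (counit (R := k) (rb.right j)) := by
        refine Finset.sum_congr rfl fun j _ => Finset.sum_congr rfl fun i _ => ?_
        rw [sum_mul_antipode_eq_algebraMap_counit (rb2 j)]
      _ = antipode (R := k) (a * b) := by
        conv_rhs => rw [← repr_smul_left ra, ← repr_smul_left rb]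
        rw [Finset.sum_mul_sum, map_sum, Finset.sum_comm]
        refine Finset.sum_congr rfl fun j _ => ?_
        rw [map_sum]
        refine Finset.sum_congr rfl fun i _ => ?_
        rw [smul_mul_assoc, mul_smul_comm, map_smul, map_smul,
          Algebra.smul_def, Algebra.smul_def]
        ring
  have key2 : (∑ j ∈ rb.index, ∑ q ∈ (rb2 j).index, ∑ i ∈ ra.index, ∑ p ∈ (ra2 i).index,
      antipode (R := k) (ra.left i * rb.left j) *
        (((ra2 i).left p * (rb2 j).left q) *
          (antipode (R := k) ((rb2 j).right q) * antipode (R := k) ((ra2 i).right p))))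
      = antipode (R := k) b * antipode (R := k) a := by
    calc
      _ = ∑ j ∈ rb.index, ∑ q ∈ (rb2 j).index, ∑ i ∈ ra.index, ∑ r ∈ (ra1 i).index,
            antipode (R := k) ((ra1 i).left r * rb.left j) *
              (((ra1 i).right r * (rb2 j).left q) *
                (antipode (R := k) ((rb2 j).right q) * antipode (R := k) (ra.right i))) := by
        refine Finset.sum_congr rfl fun j _ => Finset.sum_congr rfl fun q _ => ?_
        have h5 := coassoc_mul_repr ra ra1 ra2
          ((antipode (R := k)) ∘ₗ LinearMap.mulRight k (rb.left j))
          (LinearMap.mulRight k ((rb2 j).left q))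
          ((LinearMap.mulLeft k (antipode (R := k) ((rb2 j).right q))) ∘ₗ (antipode (R := k)))
        simpa using h5
      _ = ∑ i ∈ ra.index, ∑ r ∈ (ra1 i).index, ∑ j ∈ rb.index, ∑ q ∈ (rb2 j).index,
            antipode (R := k) ((ra1 i).left r * rb.left j) *
              (((ra1 i).right r * (rb2 j).left q) *
                (antipode (R := k) ((rb2 j).right q) * antipode (R := k) (ra.right i))) := by
        exact sum_swap_blocks ra.index rb.index (fun i => (ra1 i).index)
          (fun j => (rb2 j).index) _
      _ = ∑ i ∈ ra.index, ∑ r ∈ (ra1 i).index, ∑ j ∈ rb.index, ∑ s ∈ (rb1 j).index,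
            antipode (R := k) ((ra1 i).left r * (rb1 j).left s) *
              (((ra1 i).right r * (rb1 j).right s) *
                (antipode (R := k) (rb.right j) * antipode (R := k) (ra.right i))) := by
        refine Finset.sum_congr rfl fun i _ => Finset.sum_congr rfl fun r _ => ?_
        have h6 := coassoc_mul_repr rb rb1 rb2
          ((antipode (R := k)) ∘ₗ LinearMap.mulLeft k ((ra1 i).left r))
          (LinearMap.mulLeft k ((ra1 i).right r))
          ((LinearMap.mulRight k (antipode (R := k) (ra.right i))) ∘ₗ (antipode (R := k)))
        simpa using h6
      _ = ∑ i ∈ ra.index, ∑ j ∈ rb.index,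
            (∑ r ∈ (ra1 i).index, ∑ s ∈ (rb1 j).index,
              antipode (R := k) ((ra1 i).left r * (rb1 j).left s) *
                ((ra1 i).right r * (rb1 j).right s)) *
            (antipode (R := k) (rb.right j) * antipode (R := k) (ra.right i)) := by
        refine Finset.sum_congr rfl fun i _ => ?_
        rw [Finset.sum_comm]
        refine Finset.sum_congr rfl fun j _ => ?_
        rw [Finset.sum_mul]
        refine Finset.sum_congr rfl fun r _ => ?_
        rw [Finset.sum_mul]
        exact Finset.sum_congr rfl fun s _ => by ring
      _ = ∑ i ∈ ra.index, ∑ j ∈ rb.index,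
            (algebraMap k H (counit (R := k) (ra.left i)) *
              algebraMap k H (counit (R := k) (rb.left j))) *
            (antipode (R := k) (rb.right j) * antipode (R := k) (ra.right i)) := by
        refine Finset.sum_congr rfl fun i _ => Finset.sum_congr rfl fun j _ => ?_
        rw [antipode_repr_mul_eq (ra1 i) (rb1 j)]
      _ = antipode (R := k) b * antipode (R := k) a := by
        conv_rhs => rw [← repr_smul_right rb, ← repr_smul_right ra]
        rw [map_sum, map_sum, Finset.sum_mul_sum, Finset.sum_comm]
        refine Finset.sum_congr rfl fun i _ => Finset.sum_congr rfl fun j _ => ?_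
        rw [map_smul, map_smul, smul_mul_assoc, mul_smul_comm,
          Algebra.smul_def, Algebra.smul_def]
        ring
  rw [← key, key2, mul_comm]


lemma Y_deriv (𝒜 : ℕ → Submodule k H) [GradedAlgebra 𝒜]
    (Y : H →ₗ[k] H) (hY : ∀ n : ℕ, ∀ x ∈ 𝒜 n, Y x = (n : k) • x) :
    ∀ a b : H, Y (a * b) = Y a * b + a * Y b := by
  have main : ∀ a b : H, Y (a * b) = Y a * b + a * Y b := by
    intro a
    induction a using DirectSum.Decomposition.inductionOn 𝒜 with
    | zero => intro b; simp
    | @homogeneous m ma =>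
      intro b
      induction b using DirectSum.Decomposition.inductionOn 𝒜 with
      | zero => simp
      | @homogeneous n nb =>
        have h1 : Y ((ma : H) * (nb : H)) = ((m + n : ℕ) : k) • ((ma : H) * (nb : H)) :=
          hY (m + n) _ (SetLike.mul_mem_graded ma.2 nb.2)
        rw [h1, hY m (ma : H) ma.2, hY n (nb : H) nb.2, Nat.cast_add, add_smul,
          smul_mul_assoc, mul_smul_comm]
      | add b b' hb hb' =>
        rw [mul_add, map_add, hb, hb', map_add]
        ring
    | add a a' ha ha' =>
      intro b
      rw [add_mul, map_add, ha, ha', map_add]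
      ring
  exact main

end Helpers

/-- Dynkin operator annihilates products. -/
theorem dynkin_operator_annihilates_products
    {k H : Type*} [CommRing k] [CommRing H] [HopfAlgebra k H]
    (𝒜 : ℕ → Submodule k H) [GradedAlgebra 𝒜]
    (hconn : 𝒜 0 = Submodule.span k {(1 : H)})
    (hcomul : ∀ n : ℕ, ∀ x ∈ 𝒜 n, Coalgebra.comul (R := k) x ∈
      ⨆ p ∈ Finset.range (n + 1),
        LinearMap.range (TensorProduct.map (𝒜 p).subtype (𝒜 (n - p)).subtype))
    (Y : H →ₗ[k] H) (hY : ∀ n : ℕ, ∀ x ∈ 𝒜 n, Y x = (n : k) • x)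
    (x y : H)
    (hx : x ∈ LinearMap.ker (Coalgebra.counit (R := k) (A := H)))
    (hy : y ∈ LinearMap.ker (Coalgebra.counit (R := k) (A := H))) :
    (LinearMap.mul' k H ∘ₗ
        TensorProduct.map (HopfAlgebra.antipode (R := k)) Y ∘ₗ
        Coalgebra.comul) (x * y) = 0 := by
  classical
  have rx : Coalgebra.Repr k x (H × H) := Coalgebra.Repr.arbitrary k x
  have ry : Coalgebra.Repr k y (H × H) := Coalgebra.Repr.arbitrary k y
  have hex : Coalgebra.counit (R := k) x = 0 := hx
  have hey : Coalgebra.counit (R := k) y = 0 := hy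
  have hYd := Y_deriv 𝒜 Y hY
  rw [LinearMap.comp_apply, LinearMap.comp_apply, comul_mul_repr rx ry]
  simp only [map_sum, TensorProduct.map_tmul, LinearMap.mul'_apply]
  calc
    ∑ i ∈ rx.index, ∑ j ∈ ry.index,
        HopfAlgebra.antipode (R := k) (rx.left i * ry.left j) * Y (rx.right i * ry.right j)
      = ∑ i ∈ rx.index, ∑ j ∈ ry.index,
          ((HopfAlgebra.antipode (R := k) (rx.left i) * Y (rx.right i)) *
            (HopfAlgebra.antipode (R := k) (ry.left j) * ry.right j) +
          (HopfAlgebra.antipode (R := k) (rx.left i) * rx.right i) *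
            (HopfAlgebra.antipode (R := k) (ry.left j) * Y (ry.right j))) := by
        refine Finset.sum_congr rfl fun i _ => Finset.sum_congr rfl fun j _ => ?_
        rw [antipode_mul_comm, hYd]
        ring
    _ = (∑ i ∈ rx.index, HopfAlgebra.antipode (R := k) (rx.left i) * Y (rx.right i)) *
          (∑ j ∈ ry.index, HopfAlgebra.antipode (R := k) (ry.left j) * ry.right j) +
        (∑ i ∈ rx.index, HopfAlgebra.antipode (R := k) (rx.left i) * rx.right i) *
          (∑ j ∈ ry.index, HopfAlgebra.antipode (R := k) (ry.left j) * Y (ry.right j)) := by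
        simp only [Finset.sum_add_distrib]
        rw [← Finset.sum_mul_sum, ← Finset.sum_mul_sum]
    _ = 0 := by
        rw [HopfAlgebra.sum_antipode_mul_eq_algebraMap_counit ry, HopfAlgebra.sum_antipode_mul_eq_algebraMap_counit rx,
          hex, hey, map_zero, mul_zero, zero_mul, add_zero]
end
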